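/- arXiv:0811.0544 — 4 statements merged into one kernel-verified Lean document; each statement's English description precedes it below -/
import Mathlib

section
/- Let T be a surjective isometry on a complex Banach space Y and let x̄ ∈ Y. If the Y-valued analytic function g(λ) = R(λ,T)x̄ (defined for |λ| ≠ 1) has an isolated singular point ξ₀ on the unit circle, then ξ₀ is either a removable singular point or a pole of first order of g. -/
open Filter Topology BoundedContinuousFunction

open Metric Set in
/-- For a surjective isometry `T` and `‖lam‖ ≠ 1`, `lam` belongs to the resolvent set. -/
private lemma stmt2_aux_resolventSet {Y : Type*} [NormedAddCommGroup Y] [NormedSpace ℂ Y]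
    [CompleteSpace Y] [Nontrivial Y]
    (T : Y →L[ℂ] Y) (hsur : Function.Surjective T) (hiso : ∀ v : Y, ‖T v‖ = ‖v‖)
    (lam : ℂ) (hlam : ‖lam‖ ≠ 1) : lam ∈ resolventSet ℂ T := by
  have hTnorm : ‖T‖ ≤ 1 := T.opNorm_le_bound zero_le_one (fun v => by rw [hiso]; simp)
  have hinj : Function.Injective T := by
    intro u v huv
    have h0 : ‖u - v‖ = 0 := by rw [← hiso, map_sub, huv, sub_self, norm_zero]
    exact sub_eq_zero.1 (norm_eq_zero.1 h0)
  have key : ∀ S : Y →L[ℂ] Y, ‖S‖ ≤ 1 → ∀ mu : ℂ, 1 < ‖mu‖ →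
      IsUnit (algebraMap ℂ (Y →L[ℂ] Y) mu - S) := by
    intro S hS mu hmu
    have : mu ∈ resolventSet ℂ S := by
      by_contra hns
      have h1 : mu ∈ spectrum ℂ S := hns
      have := spectrum.norm_le_norm_of_mem h1
      linarith
    exact this
  rcases lt_or_gt_of_ne hlam with hlt | hgt
  · set e := ContinuousLinearEquiv.ofBijective T (LinearMap.ker_eq_bot.2 hinj)
      (LinearMap.range_eq_top.2 hsur) with he
    have hTinv_iso : ∀ v : Y, ‖(e.symm : Y →L[ℂ] Y) v‖ = ‖v‖ := by
      intro v
      rw [← hiso ((e.symm : Y →L[ℂ] Y) v)]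
      exact congrArg norm (e.apply_symm_apply v)
    have hTinv_norm : ‖(e.symm : Y →L[ℂ] Y)‖ ≤ 1 :=
      ContinuousLinearMap.opNorm_le_bound _ zero_le_one (fun v => by rw [hTinv_iso]; simp)
    have hmul1 : T * (e.symm : Y →L[ℂ] Y) = 1 := by
      ext v; exact e.apply_symm_apply v
    have hmul2 : (e.symm : Y →L[ℂ] Y) * T = 1 := by
      ext v; exact e.symm_apply_apply v
    rcases eq_or_ne lam 0 with h0 | h0
    · rw [spectrum.mem_resolventSet_iff, h0, map_zero, zero_sub, IsUnit.neg_iff]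
      exact ⟨⟨T, (e.symm : Y →L[ℂ] Y), hmul1, hmul2⟩, rfl⟩
    · rw [spectrum.mem_resolventSet_iff]
      have hmu : 1 < ‖lam⁻¹‖ := by
        rw [norm_inv, one_lt_inv_iff₀]
        exact ⟨norm_pos_iff.2 h0, hlt⟩
      have hu2 : IsUnit (algebraMap ℂ (Y →L[ℂ] Y) lam⁻¹ - (e.symm : Y →L[ℂ] Y)) :=
        key _ hTinv_norm _ hmu
      have hfact : algebraMap ℂ (Y →L[ℂ] Y) lam - T =
          -(T * (algebraMap ℂ (Y →L[ℂ] Y) lam⁻¹ - (e.symm : Y →L[ℂ] Y)) *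
            algebraMap ℂ (Y →L[ℂ] Y) lam) := by
        rw [mul_sub, sub_mul, mul_assoc T, ← map_mul, inv_mul_cancel₀ h0, map_one, mul_one,
          hmul1, one_mul, neg_sub]
      have hT : IsUnit T := ⟨⟨T, (e.symm : Y →L[ℂ] Y), hmul1, hmul2⟩, rfl⟩
      rw [hfact, IsUnit.neg_iff]
      exact (hT.mul hu2).mul ((isUnit_iff_ne_zero.2 h0).map (algebraMap ℂ (Y →L[ℂ] Y)))
  · exact key T hTnorm lam hgt

open Metric Set in
/-- The basic resolvent bound for a (surjective) isometry. -/
private lemma stmt2_aux_bound {Y : Type*} [NormedAddCommGroup Y] [NormedSpace ℂ Y]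
    [CompleteSpace Y]
    (T : Y →L[ℂ] Y) (hiso : ∀ v : Y, ‖T v‖ = ‖v‖) (xb : Y)
    (lam : ℂ) (hres : lam ∈ resolventSet ℂ T) :
    ‖resolvent T lam xb‖ * |‖lam‖ - 1| ≤ ‖xb‖ := by
  have hu : IsUnit (algebraMap ℂ (Y →L[ℂ] Y) lam - T) := spectrum.mem_resolventSet_iff.1 hres
  have h1 : (algebraMap ℂ (Y →L[ℂ] Y) lam - T) * resolvent T lam = 1 :=
    Ring.mul_inverse_cancel _ hu
  set v := resolvent T lam xb with hv
  have h2 : lam • v - T v = xb := by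
    have := congrArg (fun S : Y →L[ℂ] Y => S xb) h1
    simpa [ContinuousLinearMap.mul_apply, Algebra.algebraMap_eq_smul_one,
      ContinuousLinearMap.sub_apply, ContinuousLinearMap.smul_apply] using this
  calc ‖v‖ * |‖lam‖ - 1| = |‖lam • v‖ - ‖T v‖| := by
        rw [norm_smul, hiso]
        rw [show ‖lam‖ * ‖v‖ - ‖v‖ = (‖lam‖ - 1) * ‖v‖ by ring, abs_mul, abs_norm, mul_comm]
    _ ≤ ‖lam • v - T v‖ := abs_norm_sub_norm_le _ _
    _ = ‖xb‖ := by rw [h2]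

open Metric Set Complex in
/-- Key quantitative maximum-principle lemma: if an analytic function on a closed disk
satisfies the resolvent-type bound `‖h w‖ ≤ B / |‖w‖ - 1|` on the boundary circle (off the
unit circle), then its value at the center is controlled by `B` divided by the radius. -/
private lemma stmt2_aux_key {Y : Type*} [NormedAddCommGroup Y] [NormedSpace ℂ Y]
    [CompleteSpace Y]
    (h : ℂ → Y) (c : ℂ) (s B : ℝ) (hs : 0 < s) (hB : 0 ≤ B)
    (hc1 : 1/2 ≤ ‖c‖) (hc2 : ‖c‖ + s ≤ 2)
    (hd : DifferentiableOn ℂ h (closedBall c s))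
    (hb : ∀ w : ℂ, dist w c = s → ‖w‖ ≠ 1 → ‖h w‖ * |‖w‖ - 1| ≤ B) :
    ‖h c‖ * s ≤ 6 * B := by
  set P : ℂ → ℂ := fun w =>
    (starRingEnd ℂ) c * w ^ 2 - (1 + c * (starRingEnd ℂ) c - (s : ℂ) ^ 2) * w + c with hP
  set g : ℂ → Y := fun w => P w • h w with hg
  have habs : ∀ w : ℂ, dist w c = s → ‖P w‖ = s * |‖w‖ ^ 2 - 1| := by
    intro w hw
    have hwc : ‖w - c‖ = s := by rw [← dist_eq_norm]; exact hw
    have hww : (w - c) * ((starRingEnd ℂ) w - (starRingEnd ℂ) c) = (s : ℂ) ^ 2 := by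
      have := Complex.mul_conj (w - c)
      rw [map_sub] at this
      rw [this, Complex.normSq_eq_norm_sq, hwc]
      push_cast
      ring
    have hfact : P w = (w * (starRingEnd ℂ) w - 1) * (w - c) := by
      simp only [hP]
      linear_combination (-w) * hww
    rw [hfact, norm_mul, hwc]
    have : w * (starRingEnd ℂ) w - 1 = ((‖w‖ ^ 2 - 1 : ℝ) : ℂ) := by
      rw [Complex.mul_conj, Complex.normSq_eq_norm_sq]
      push_cast
      ring
    rw [this, Complex.norm_real, Real.norm_eq_abs, mul_comm]
  have hmax : ‖g c‖ ≤ 3 * s * B := by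
    apply Complex.norm_le_of_forall_mem_frontier_norm_le isBounded_ball
    · apply DifferentiableOn.diffContOnCl
      rw [closure_ball c hs.ne']
      apply DifferentiableOn.smul
      · fun_prop
      · exact hd
    · intro z hz
      rw [frontier_ball c hs.ne'] at hz
      have hzc : dist z c = s := mem_sphere.mp hz
      have hznorm : ‖z‖ ≤ ‖c‖ + s := by
        calc ‖z‖ = ‖c + (z - c)‖ := by ring_nf
          _ ≤ ‖c‖ + ‖z - c‖ := norm_add_le _ _
          _ = ‖c‖ + s := by rw [← dist_eq_norm z c, hzc]
      have hgz : ‖g z‖ = s * |‖z‖ ^ 2 - 1| * ‖h z‖ := by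
        rw [hg]; simp only [norm_smul]; rw [habs z hzc]
      rcases eq_or_ne ‖z‖ 1 with h1 | h1
      · rw [hgz, h1]
        simp
        positivity
      · have hsplit : |‖z‖ ^ 2 - 1| = (‖z‖ + 1) * |‖z‖ - 1| := by
          rw [← _root_.abs_of_nonneg (by positivity : (0:ℝ) ≤ ‖z‖ + 1), ← abs_mul]
          congr 1
          ring
        rw [hgz, hsplit]
        calc s * ((‖z‖ + 1) * |‖z‖ - 1|) * ‖h z‖
            = s * (‖z‖ + 1) * (‖h z‖ * |‖z‖ - 1|) := by ring
          _ ≤ s * 3 * B := by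
              apply mul_le_mul (by nlinarith) (hb z hzc h1) (by positivity) (by positivity)
          _ = 3 * s * B := by ring
    · exact subset_closure (mem_ball_self hs)
  have hPc : P c = (s : ℂ) ^ 2 * c := by
    simp only [hP]
    ring
  have hgc : ‖g c‖ = s ^ 2 * ‖c‖ * ‖h c‖ := by
    rw [hg]
    simp only [norm_smul, hPc, norm_mul]
    rw [norm_pow, Complex.norm_real, Real.norm_eq_abs, abs_of_pos hs]
  rw [hgc] at hmax
  have hfin : s * (‖h c‖ * s) ≤ s * (6 * B) := by
    nlinarith [mul_le_mul_of_nonneg_left hc1 (mul_nonneg (sq_nonneg s) (norm_nonneg (h c)))]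
  exact (mul_le_mul_iff_right₀ hs).1 hfin

theorem stmt2 {Y : Type*} [NormedAddCommGroup Y] [NormedSpace ℂ Y] [CompleteSpace Y]
    (T : Y →L[ℂ] Y) (hsur : Function.Surjective T) (hiso : ∀ v : Y, ‖T v‖ = ‖v‖)
    (xb : Y) (ξ₀ : ℂ) (hξ : ‖ξ₀‖ = 1)
    (hsing : ∃ U : Set ℂ, IsOpen U ∧ ξ₀ ∈ U ∧ ∃ h : ℂ → Y,
        AnalyticOnNhd ℂ h (U \ {ξ₀}) ∧
        ∀ lam ∈ U \ {ξ₀}, ‖lam‖ ≠ 1 → h lam = resolvent T lam xb) :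
    ∃ V : Set ℂ, IsOpen V ∧ ξ₀ ∈ V ∧ ∃ f : ℂ → Y, AnalyticOnNhd ℂ f V ∧
        ∀ lam ∈ V, ‖lam‖ ≠ 1 → f lam = (lam - ξ₀) • resolvent T lam xb := by
  classical
  obtain ⟨U, hUopen, hξU, h, h_an, h_eq⟩ := hsing
  rcases subsingleton_or_nontrivial Y with hY | hY
  · refine ⟨Metric.ball ξ₀ 1, Metric.isOpen_ball, Metric.mem_ball_self one_pos,
      (fun _ => 0), ?_, fun lam _ _ => Subsingleton.elim _ _⟩
    exact fun z _ => analyticAt_const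
  -- resolvent set and bound
  have hres : ∀ lam : ℂ, ‖lam‖ ≠ 1 → lam ∈ resolventSet ℂ T := fun lam hlam =>
    stmt2_aux_resolventSet T hsur hiso lam hlam
  have hbnd : ∀ lam : ℂ, ‖lam‖ ≠ 1 → ‖resolvent T lam xb‖ * |‖lam‖ - 1| ≤ ‖xb‖ :=
    fun lam hlam => stmt2_aux_bound T hiso xb lam (hres lam hlam)
  -- choose a radius
  obtain ⟨ε, hε, hεU⟩ := Metric.isOpen_iff.1 hUopen ξ₀ hξU
  set r : ℝ := min (ε/3) (8⁻¹) with hr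
  have hr0 : 0 < r := lt_min (by linarith) (by norm_num)
  have hr8 : r ≤ 8⁻¹ := min_le_right _ _
  have hball2 : Metric.closedBall ξ₀ (2*r) ⊆ U := by
    intro w hw
    apply hεU
    have : dist w ξ₀ ≤ 2*r := Metric.mem_closedBall.1 hw
    have h2r : 2*r < ε := by
      have : r ≤ ε/3 := min_le_left _ _
      linarith
    exact Metric.mem_ball.2 (lt_of_le_of_lt this h2r)
  have hballU : Metric.ball ξ₀ r ⊆ U := fun w hw => hball2 <| by
    have := Metric.mem_ball.1 hw
    exact Metric.mem_closedBall.2 (by linarith)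
  have h8 : (8:ℝ)⁻¹ = 1/8 := by norm_num
  -- the key pointwise bound
  have key : ∀ c : ℂ, c ∈ Metric.ball ξ₀ r → c ≠ ξ₀ → ‖h c‖ * ‖c - ξ₀‖ ≤ 12 * ‖xb‖ := by
    intro c hc hcne
    set s : ℝ := ‖c - ξ₀‖ / 2 with hsdef
    have hcd : 0 < ‖c - ξ₀‖ := by
      rw [norm_pos_iff]
      exact sub_ne_zero.2 hcne
    have h2s : ‖c - ξ₀‖ = 2 * s := by rw [hsdef]; ring
    have hs : 0 < s := by rw [hsdef]; positivity
    have hcr : ‖c - ξ₀‖ < r := by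
      rw [← dist_eq_norm]
      exact Metric.mem_ball.1 hc
    have hsub : Metric.closedBall c s ⊆ U \ {ξ₀} := by
      intro w hw
      have hwc : ‖w - c‖ ≤ s := by rw [← dist_eq_norm]; exact Metric.mem_closedBall.1 hw
      constructor
      · apply hball2
        rw [Metric.mem_closedBall, dist_eq_norm]
        calc ‖w - ξ₀‖ = ‖(w - c) + (c - ξ₀)‖ := by ring_nf
          _ ≤ ‖w - c‖ + ‖c - ξ₀‖ := norm_add_le _ _
          _ ≤ 2*r := by linarith
      · simp only [Set.mem_singleton_iff]
        intro hwξ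
        rw [hwξ, norm_sub_rev] at hwc
        linarith
    have hc1 : 1/2 ≤ ‖c‖ := by
      have h1 : ‖ξ₀‖ - ‖c‖ ≤ ‖ξ₀ - c‖ := norm_sub_norm_le ξ₀ c
      rw [norm_sub_rev ξ₀ c, hξ] at h1
      linarith
    have hc2 : ‖c‖ + s ≤ 2 := by
      have h1 : ‖c‖ ≤ ‖ξ₀‖ + ‖c - ξ₀‖ := by
        calc ‖c‖ = ‖ξ₀ + (c - ξ₀)‖ := by ring_nf
          _ ≤ ‖ξ₀‖ + ‖c - ξ₀‖ := norm_add_le _ _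
      rw [hξ] at h1
      linarith
    have hd : DifferentiableOn ℂ h (Metric.closedBall c s) := fun w hw =>
      ((h_an w (hsub hw)).differentiableAt).differentiableWithinAt
    have hb : ∀ w : ℂ, dist w c = s → ‖w‖ ≠ 1 → ‖h w‖ * |‖w‖ - 1| ≤ ‖xb‖ := by
      intro w hw hw1
      have hwU : w ∈ U \ {ξ₀} := hsub (Metric.mem_closedBall.2 (le_of_eq hw))
      rw [h_eq w hwU hw1]
      exact hbnd w hw1
    have hk := stmt2_aux_key h c s ‖xb‖ hs (norm_nonneg _) hc1 hc2 hd hb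
    calc ‖h c‖ * ‖c - ξ₀‖ = 2 * (‖h c‖ * s) := by rw [h2s]; ring
      _ ≤ 2 * (6 * ‖xb‖) := by linarith
      _ = 12 * ‖xb‖ := by ring
  -- removable singularity
  set f₁ : ℂ → Y := fun lam => (lam - ξ₀) • h lam with hf₁
  have hd1 : DifferentiableOn ℂ f₁ (Metric.ball ξ₀ r \ {ξ₀}) := by
    apply DifferentiableOn.smul
    · fun_prop
    · intro w hw
      exact ((h_an w ⟨hballU hw.1, hw.2⟩).differentiableAt).differentiableWithinAt
  have ho : f₁ =o[𝓝[≠] ξ₀] fun z => (z - ξ₀)⁻¹ := by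
    rw [Asymptotics.isLittleO_iff]
    intro ε' hε'
    set δ : ℝ := min r (ε' / (12 * ‖xb‖ + 1)) with hδdef
    have hδ : 0 < δ := lt_min hr0 (by positivity)
    have hball : Metric.ball ξ₀ δ ∈ 𝓝[≠] ξ₀ :=
      nhdsWithin_le_nhds (Metric.ball_mem_nhds _ hδ)
    filter_upwards [hball, self_mem_nhdsWithin] with z hz hz'
    have hzne : z ≠ ξ₀ := hz'
    have hzd : 0 < ‖z - ξ₀‖ := by rw [norm_pos_iff]; exact sub_ne_zero.2 hzne
    have hzr : z ∈ Metric.ball ξ₀ r :=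
      Metric.mem_ball.2 (lt_of_lt_of_le (Metric.mem_ball.1 hz) (min_le_left _ _))
    have hf1z : ‖f₁ z‖ ≤ 12 * ‖xb‖ := by
      rw [hf₁]
      simp only [norm_smul]
      calc ‖z - ξ₀‖ * ‖h z‖ = ‖h z‖ * ‖z - ξ₀‖ := by ring
        _ ≤ 12 * ‖xb‖ := key z hzr hzne
    have hzδ : ‖z - ξ₀‖ < δ := by rw [← dist_eq_norm]; exact Metric.mem_ball.1 hz
    have hzε : ‖z - ξ₀‖ * (12 * ‖xb‖ + 1) ≤ ε' := by
      have h1 : ‖z - ξ₀‖ ≤ ε' / (12 * ‖xb‖ + 1) :=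
        le_of_lt (lt_of_lt_of_le hzδ (min_le_right _ _))
      have h2 : (0:ℝ) < 12 * ‖xb‖ + 1 := by positivity
      calc ‖z - ξ₀‖ * (12 * ‖xb‖ + 1) ≤ (ε' / (12 * ‖xb‖ + 1)) * (12 * ‖xb‖ + 1) :=
            mul_le_mul_of_nonneg_right h1 h2.le
        _ = ε' := div_mul_cancel₀ _ h2.ne'
    rw [norm_inv, ← div_eq_mul_inv, le_div_iff₀ hzd]
    calc ‖f₁ z‖ * ‖z - ξ₀‖ ≤ (12 * ‖xb‖) * ‖z - ξ₀‖ :=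
          mul_le_mul_of_nonneg_right hf1z hzd.le
      _ ≤ ‖z - ξ₀‖ * (12 * ‖xb‖ + 1) := by nlinarith
      _ ≤ ε' := hzε
  set F : ℂ → Y := Function.update f₁ ξ₀ (limUnder (𝓝[≠] ξ₀) f₁) with hF
  have hf0 : f₁ ξ₀ = 0 := by simp [hf₁]
  have ho2 : (fun z => f₁ z - f₁ ξ₀) =o[𝓝[≠] ξ₀] fun z => (z - ξ₀)⁻¹ := by
    simpa [hf0] using ho
  have hFd : DifferentiableOn ℂ F (Metric.ball ξ₀ r) :=
    Complex.differentiableOn_update_limUnder_of_isLittleO (Metric.ball_mem_nhds ξ₀ hr0) hd1 ho2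
  refine ⟨Metric.ball ξ₀ r, Metric.isOpen_ball, Metric.mem_ball_self hr0, F,
    hFd.analyticOnNhd Metric.isOpen_ball, ?_⟩
  intro lam hlam hnorm
  have hne : lam ≠ ξ₀ := fun hl => hnorm (by rw [hl, hξ])
  rw [hF, Function.update_of_ne hne]
  show (lam - ξ₀) • h lam = _
  rw [h_eq lam ⟨hballU hlam, hne⟩ hnorm]
end

section
/- Let T be a surjective isometry on a complex Banach space Y, x̄ ∈ Y, and let ξ₀ on the unit circle be an isolated singular point of g(λ) = R(λ,T)x̄. If lim_{s↓1} (sξ₀ − ξ₀) R(sξ₀, T)x̄ = 0 (radial limit along the ray through ξ₀ from outside), then ξ₀ is a removable singular point of g. -/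
open Filter Topology BoundedContinuousFunction

open Metric

set_option linter.unusedSectionVars false




section opthy
variable {Y : Type*} [NormedAddCommGroup Y] [NormedSpace ℂ Y] [CompleteSpace Y]

lemma tsum_geom_norm_le (t : Y →L[ℂ] Y) (h : ‖t‖ < 1) :
    ‖(∑' n : ℕ, t ^ n)‖ ≤ (1 - ‖t‖)⁻¹ := by
  have h1 : ‖(1 : Y →L[ℂ] Y)‖ ≤ 1 := ContinuousLinearMap.norm_id_le
  have := tsum_geometric_le_of_norm_lt_one t h
  linarith

lemma res_bound (T : Y →L[ℂ] Y) (hsur : Function.Surjective T) (hiso : ∀ v : Y, ‖T v‖ = ‖v‖)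
    {μ : ℂ} (hμ : ‖μ‖ ≠ 1) : ‖resolvent T μ‖ ≤ |‖μ‖ - 1|⁻¹ := by
  have hT1 : ‖T‖ ≤ 1 := T.opNorm_le_bound zero_le_one (fun v => by rw [hiso v, one_mul])
  rcases lt_or_gt_of_ne hμ with hlt | hgt
  · -- ‖μ‖ < 1 : need T invertible
    have hinj : Function.Injective T := by
      intro a b hab
      have h2 : ‖T (a - b)‖ = ‖a - b‖ := hiso _
      rw [map_sub, hab, sub_self, norm_zero] at h2
      exact sub_eq_zero.mp (by rw [← norm_eq_zero, ← h2])
    set e : Y ≃L[ℂ] Y := ContinuousLinearEquiv.ofBijective T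
      (LinearMap.ker_eq_bot.2 hinj) (LinearMap.range_eq_top.2 hsur) with he
    set S : Y →L[ℂ] Y := (e.symm : Y →L[ℂ] Y) with hs
    have hTe : ∀ y, T (S y) = y := fun y => e.apply_symm_apply y
    have hTS : T * S = 1 := by ext y; exact hTe y
    have hST : S * T = 1 := by ext y; exact e.symm_apply_apply y
    have hSn : ‖S‖ ≤ 1 := S.opNorm_le_bound zero_le_one (fun v => le_of_eq
      (calc ‖S v‖ = ‖T (S v)‖ := (hiso _).symm
        _ = ‖v‖ := by rw [hTe]
        _ = 1 * ‖v‖ := (one_mul _).symm))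
    have hms : ‖μ • S‖ = ‖μ‖ * ‖S‖ := norm_smul μ S
    have hmsle : ‖μ • S‖ ≤ ‖μ‖ := by
      rw [hms]
      nlinarith [norm_nonneg S, norm_nonneg μ]
    have ht : ‖μ • S‖ < 1 := lt_of_le_of_lt hmsle hlt
    set uT : (Y →L[ℂ] Y)ˣ := ⟨T, S, hTS, hST⟩ with huT
    set u2 := Units.oneSub (μ • S) ht with hu2
    have hval : algebraMap ℂ (Y →L[ℂ] Y) μ - T = ((-uT) * u2 : (Y →L[ℂ] Y)ˣ) := by
      rw [Units.val_mul, Units.val_neg, Units.val_oneSub, Algebra.algebraMap_eq_smul_one]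
      show μ • (1 : Y →L[ℂ] Y) - T = -uT.val * (1 - μ • S)
      rw [neg_mul, mul_sub, mul_one, mul_smul_comm]
      show μ • (1 : Y →L[ℂ] Y) - T = -(T - μ • (T * S))
      rw [hTS, neg_sub]
    have hres : resolvent T μ = ((u2⁻¹ : _ˣ) : Y →L[ℂ] Y) * (-S) := by
      rw [resolvent, hval, Ring.inverse_unit, mul_inv_rev, Units.val_mul, inv_neg,
        Units.val_neg]
      rfl
    have hn2 : ‖((u2⁻¹ : _ˣ) : Y →L[ℂ] Y)‖ ≤ (1 - ‖μ • S‖)⁻¹ := tsum_geom_norm_le _ ht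
    have h1 : (0:ℝ) < 1 - ‖μ‖ := by linarith
    have h2 : (1 - ‖μ • S‖)⁻¹ ≤ (1 - ‖μ‖)⁻¹ := by
      apply inv_anti₀ h1
      linarith
    calc ‖resolvent T μ‖ ≤ ‖((u2⁻¹ : _ˣ) : Y →L[ℂ] Y)‖ * ‖(-S)‖ := by
          rw [hres]; exact norm_mul_le _ _
      _ ≤ (1 - ‖μ‖)⁻¹ * 1 := by
          apply mul_le_mul (le_trans hn2 h2) (by rw [norm_neg]; exact hSn)
            (norm_nonneg _) (by positivity)
      _ = |‖μ‖ - 1|⁻¹ := by rw [mul_one, abs_sub_comm, abs_of_nonneg (by linarith)]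
  · -- ‖μ‖ > 1
    have hμ0 : μ ≠ 0 := by intro h; rw [h, norm_zero] at hgt; linarith
    have hmt : ‖μ⁻¹ • T‖ = ‖μ‖⁻¹ * ‖T‖ := by rw [norm_smul μ⁻¹ T, norm_inv]
    have hmtle : ‖μ⁻¹ • T‖ ≤ ‖μ‖⁻¹ := by
      rw [hmt]
      nlinarith [norm_nonneg T, inv_nonneg.2 (norm_nonneg μ)]
    have hinv1 : ‖μ‖⁻¹ < 1 := by
      rw [inv_lt_one_iff₀]; right; exact hgt
    have ht : ‖μ⁻¹ • T‖ < 1 := lt_of_le_of_lt hmtle hinv1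
    set u1 := Units.oneSub (μ⁻¹ • T) ht with hu1
    set u : (Y →L[ℂ] Y)ˣ :=
      ⟨μ • (u1 : Y →L[ℂ] Y), μ⁻¹ • ((u1⁻¹ : _ˣ) : Y →L[ℂ] Y),
        by rw [smul_mul_smul_comm, mul_inv_cancel₀ hμ0, one_smul, Units.mul_inv],
        by rw [smul_mul_smul_comm, inv_mul_cancel₀ hμ0, one_smul, Units.inv_mul]⟩ with hu
    have hval : algebraMap ℂ (Y →L[ℂ] Y) μ - T = (u : Y →L[ℂ] Y) := by
      show algebraMap ℂ (Y →L[ℂ] Y) μ - T = μ • (u1 : Y →L[ℂ] Y)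
      rw [Units.val_oneSub, Algebra.algebraMap_eq_smul_one, smul_sub, smul_smul,
        mul_inv_cancel₀ hμ0, one_smul]
    have hres : resolvent T μ = μ⁻¹ • ((u1⁻¹ : _ˣ) : Y →L[ℂ] Y) := by
      rw [resolvent, hval, Ring.inverse_unit]
      rfl
    have hn1 : ‖((u1⁻¹ : _ˣ) : Y →L[ℂ] Y)‖ ≤ (1 - ‖μ⁻¹ • T‖)⁻¹ := tsum_geom_norm_le _ ht
    have h1 : (0:ℝ) < 1 - ‖μ‖⁻¹ := by linarith
    have h2 : (1 - ‖μ⁻¹ • T‖)⁻¹ ≤ (1 - ‖μ‖⁻¹)⁻¹ := by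
      apply inv_anti₀ h1; linarith
    have h5 : ‖resolvent T μ‖ = ‖μ‖⁻¹ * ‖((u1⁻¹ : _ˣ) : Y →L[ℂ] Y)‖ := by
      rw [hres]
      exact (norm_smul μ⁻¹ ((u1⁻¹ : (Y →L[ℂ] Y)ˣ) : Y →L[ℂ] Y)).trans (by rw [norm_inv])
    have h3 : ‖resolvent T μ‖ ≤ ‖μ‖⁻¹ * (1 - ‖μ‖⁻¹)⁻¹ := by
      rw [h5]
      exact mul_le_mul_of_nonneg_left (le_trans hn1 h2) (by positivity)
    have h4 : ‖μ‖⁻¹ * (1 - ‖μ‖⁻¹)⁻¹ = (‖μ‖ - 1)⁻¹ := by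
      rw [← mul_inv]
      rw [mul_sub, mul_one, mul_inv_cancel₀ (by positivity : ‖μ‖ ≠ 0)]
    rw [abs_of_pos (by linarith : (0:ℝ) < ‖μ‖ - 1)]
    rw [h4] at h3
    exact h3
end opthy
section key
variable {Y : Type*} [NormedAddCommGroup Y] [NormedSpace ℂ Y] [CompleteSpace Y]

lemma key_bound {h : ℂ → Y} {c : ℂ} {r B : ℝ} (hr : 0 < r) (hB : 0 ≤ B) (hc0 : c ≠ 0)
    (hd : DifferentiableOn ℂ h (closedBall c r))
    (hsb : ∀ μ ∈ sphere c r, ‖μ‖ ≠ 1 → ‖h μ‖ ≤ B / |‖μ‖ - 1|)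
    (hμ2 : ∀ μ ∈ sphere c r, ‖μ‖ ≤ 2) :
    ‖h c‖ ≤ 3 * B / (‖c‖ * r) := by
  set Q : ℂ → ℂ := fun μ =>
    (starRingEnd ℂ) c * μ ^ 2 + ((r : ℂ) ^ 2 - (starRingEnd ℂ) c * c - 1) * μ + c with hQ
  set G : ℂ → Y := fun μ => Q μ • h μ with hG
  have hQd : Differentiable ℂ Q := by
    apply Differentiable.add
    apply Differentiable.add
    · exact (differentiable_pow 2).const_mul _
    · exact differentiable_id.const_mul _
    · exact differentiable_const _
  have hGd : DifferentiableOn ℂ G (closedBall c r) :=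
    (hQd.differentiableOn).smul hd
  -- key identity on the sphere
  have hQsph : ∀ μ ∈ sphere c r, Q μ = ((‖μ‖ ^ 2 - 1 : ℝ) : ℂ) * (μ - c) := by
    intro μ hμ
    have hms : ‖μ - c‖ = r := mem_sphere_iff_norm.mp hμ
    have hc2 : (μ - c) * ((starRingEnd ℂ) μ - (starRingEnd ℂ) c) = (r : ℂ) ^ 2 := by
      have := Complex.mul_conj (μ - c)
      rw [map_sub] at this
      rw [this, Complex.normSq_eq_norm_sq, hms]
      norm_cast
    have hnsq : ((‖μ‖ : ℝ) : ℂ) ^ 2 = μ * (starRingEnd ℂ) μ := by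
      rw [Complex.mul_conj, Complex.normSq_eq_norm_sq]
      norm_cast
    rw [hQ]
    push_cast
    rw [hnsq]
    linear_combination (-μ) * hc2
  -- frontier bound
  have hfr : ∀ μ ∈ sphere c r, ‖G μ‖ ≤ 3 * r * B := by
    intro μ hμ
    have hnorm : ‖G μ‖ = ‖Q μ‖ * ‖h μ‖ := norm_smul (Q μ) (h μ)
    have hQn : ‖Q μ‖ = |‖μ‖ ^ 2 - 1| * r := by
      rw [hQsph μ hμ, norm_mul, Complex.norm_real, Real.norm_eq_abs,
        mem_sphere_iff_norm.mp hμ]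
    by_cases h1 : ‖μ‖ = 1
    · rw [hnorm, hQn, h1]
      simp only [one_pow, sub_self, abs_zero, zero_mul]
      positivity
    · rw [hnorm, hQn]
      have hfac : |‖μ‖ ^ 2 - 1| = (‖μ‖ + 1) * |‖μ‖ - 1| := by
        rw [← _root_.abs_of_nonneg (by positivity : (0:ℝ) ≤ ‖μ‖ + 1), ← abs_mul]
        congr 1
        ring
      have hne : |‖μ‖ - 1| ≠ 0 := by
        simp only [abs_ne_zero, sub_ne_zero]
        exact h1
      calc |‖μ‖ ^ 2 - 1| * r * ‖h μ‖ ≤ |‖μ‖ ^ 2 - 1| * r * (B / |‖μ‖ - 1|) := by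
            apply mul_le_mul_of_nonneg_left (hsb μ hμ h1) (by positivity)
        _ = (‖μ‖ + 1) * r * B * (|‖μ‖ - 1| / |‖μ‖ - 1|) := by rw [hfac]; ring
        _ = (‖μ‖ + 1) * r * B := by rw [div_self hne, mul_one]
        _ ≤ 3 * r * B := by
            apply mul_le_mul_of_nonneg_right _ hB
            have := hμ2 μ hμ
            nlinarith [hr.le]
  -- maximum modulus
  have hGc : ‖G c‖ ≤ 3 * r * B := by
    apply Complex.norm_le_of_forall_mem_frontier_norm_le isBounded_ball
    · apply DifferentiableOn.diffContOnCl
      rwa [closure_ball c hr.ne']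
    · intro μ hμ
      rw [frontier_ball c hr.ne'] at hμ
      exact hfr μ hμ
    · exact subset_closure (mem_ball_self hr)
  -- compute G c
  have hQc : Q c = c * (r : ℂ) ^ 2 := by rw [hQ]; ring
  have hGcn : ‖G c‖ = ‖c‖ * r ^ 2 * ‖h c‖ := by
    have : ‖G c‖ = ‖Q c‖ * ‖h c‖ := norm_smul (Q c) (h c)
    rw [this, hQc, norm_mul, norm_pow, Complex.norm_real]
    rw [Real.norm_eq_abs, abs_of_pos hr]
  rw [hGcn] at hGc
  have hcpos : 0 < ‖c‖ := norm_pos_iff.mpr hc0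
  rw [le_div_iff₀ (by positivity : (0:ℝ) < ‖c‖ * r)]
  nlinarith [hGc, hr, mul_pos hcpos hr]
end key

set_option maxHeartbeats 1000000 in
theorem stmt3 {Y : Type*} [NormedAddCommGroup Y] [NormedSpace ℂ Y] [CompleteSpace Y]
    (T : Y →L[ℂ] Y) (hsur : Function.Surjective T) (hiso : ∀ v : Y, ‖T v‖ = ‖v‖)
    (xb : Y) (ξ₀ : ℂ) (hξ : ‖ξ₀‖ = 1)
    (hsing : ∃ U : Set ℂ, IsOpen U ∧ ξ₀ ∈ U ∧ ∃ h : ℂ → Y,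
        AnalyticOnNhd ℂ h (U \ {ξ₀}) ∧
        ∀ lam ∈ U \ {ξ₀}, ‖lam‖ ≠ 1 → h lam = resolvent T lam xb)
    (hrad : Filter.Tendsto (fun s : ℝ => ((s : ℂ) * ξ₀ - ξ₀) • resolvent T ((s : ℂ) * ξ₀) xb)
        (nhdsWithin 1 (Set.Ioi 1)) (nhds 0)) :
    ∃ V : Set ℂ, IsOpen V ∧ ξ₀ ∈ V ∧ ∃ f : ℂ → Y, AnalyticOnNhd ℂ f V ∧
        ∀ lam ∈ V, ‖lam‖ ≠ 1 → f lam = resolvent T lam xb := by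
  obtain ⟨U, hUo, hξU, h, hha, hhr⟩ := hsing
  obtain ⟨R₀, hR₀, hball⟩ := Metric.isOpen_iff.mp hUo ξ₀ hξU
  set R : ℝ := min R₀ 1 / 2 with hRdef
  have hR : 0 < R := by
    have : 0 < min R₀ 1 := lt_min hR₀ one_pos
    positivity
  have hRhalf : R ≤ 1 / 2 := by
    have : min R₀ 1 ≤ 1 := min_le_right _ _
    rw [hRdef]; linarith
  have hRR₀ : R ≤ R₀ / 2 := by
    have : min R₀ 1 ≤ R₀ := min_le_left _ _
    rw [hRdef]; linarith
  have hξ0 : ξ₀ ≠ 0 := by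
    intro hc; rw [hc, norm_zero] at hξ; norm_num at hξ
  have hballU : ball ξ₀ R ⊆ U := fun z hz =>
    hball (by
      rw [mem_ball] at hz ⊢
      have : R < R₀ := lt_of_le_of_lt hRR₀ (by linarith)
      linarith)
  have hsubU : ball ξ₀ R \ {ξ₀} ⊆ U \ {ξ₀} := fun z hz => ⟨hballU hz.1, hz.2⟩
  -- the key pointwise bound on the punctured ball
  have hb : ∀ c ∈ ball ξ₀ R \ {ξ₀}, ‖h c‖ ≤ 12 * ‖xb‖ / ‖c - ξ₀‖ := by
    rintro c ⟨hcball, hcne⟩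
    have hcne' : c ≠ ξ₀ := hcne
    set δ : ℝ := ‖c - ξ₀‖ with hδdef
    have hδ : 0 < δ := by
      rw [hδdef, norm_pos_iff, sub_ne_zero]; exact hcne'
    have hδR : δ < R := mem_ball_iff_norm.mp hcball
    set r : ℝ := δ / 2 with hrdef
    have hr : 0 < r := by positivity
    have hsub1 : closedBall c r ⊆ U \ {ξ₀} := by
      intro μ hμ
      rw [mem_closedBall_iff_norm] at hμ
      have hμξ : ‖μ - ξ₀‖ ≤ 3 / 2 * δ := by
        calc ‖μ - ξ₀‖ ≤ ‖μ - c‖ + ‖c - ξ₀‖ := norm_sub_le_norm_sub_add_norm_sub μ c ξ₀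
          _ ≤ r + δ := by rw [← hδdef]; linarith
          _ = 3 / 2 * δ := by rw [hrdef]; ring
      constructor
      · apply hball
        rw [mem_ball_iff_norm]
        calc ‖μ - ξ₀‖ ≤ 3 / 2 * δ := hμξ
          _ < 3 / 2 * R := by linarith
          _ ≤ 3 / 4 * R₀ := by linarith
          _ < R₀ := by linarith
      · simp only [Set.mem_singleton_iff]
        intro heq
        rw [heq] at hμ
        have h2 : δ ≤ r := by rw [hδdef, norm_sub_rev]; exact hμ
        linarith
    have hcn : 1 / 2 ≤ ‖c‖ := by
      have h1 : ‖ξ₀‖ - ‖c‖ ≤ ‖ξ₀ - c‖ := norm_sub_norm_le ξ₀ c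
      rw [norm_sub_rev, ← hδdef, hξ] at h1
      linarith
    have hc0 : c ≠ 0 := by
      intro hc; rw [hc, norm_zero] at hcn; linarith
    have hd : DifferentiableOn ℂ h (closedBall c r) :=
      (hha.mono hsub1).differentiableOn
    have hsb : ∀ μ ∈ sphere c r, ‖μ‖ ≠ 1 → ‖h μ‖ ≤ ‖xb‖ / |‖μ‖ - 1| := by
      intro μ hμ hμ1
      have hμ' : μ ∈ U \ {ξ₀} := hsub1 (sphere_subset_closedBall hμ)
      rw [hhr μ hμ' hμ1]
      calc ‖resolvent T μ xb‖ ≤ ‖resolvent T μ‖ * ‖xb‖ := (resolvent T μ).le_opNorm xb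
        _ ≤ |‖μ‖ - 1|⁻¹ * ‖xb‖ :=
            mul_le_mul_of_nonneg_right (res_bound T hsur hiso hμ1) (norm_nonneg xb)
        _ = ‖xb‖ / |‖μ‖ - 1| := by rw [div_eq_inv_mul]
    have hμ2 : ∀ μ ∈ sphere c r, ‖μ‖ ≤ 2 := by
      intro μ hμ
      have h1 : ‖μ - c‖ = r := mem_sphere_iff_norm.mp hμ
      have h2 : ‖μ‖ ≤ ‖μ - ξ₀‖ + ‖ξ₀‖ := by
        calc ‖μ‖ = ‖μ - ξ₀ + ξ₀‖ := by ring_nf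
          _ ≤ ‖μ - ξ₀‖ + ‖ξ₀‖ := norm_add_le _ _
      have h3 : ‖μ - ξ₀‖ ≤ ‖μ - c‖ + ‖c - ξ₀‖ := norm_sub_le_norm_sub_add_norm_sub μ c ξ₀
      rw [hξ] at h2
      rw [h1] at h3
      have : δ < 1 / 2 := by linarith
      have : r ≤ δ := by rw [hrdef]; linarith
      linarith
    have hkey := key_bound hr (norm_nonneg xb) hc0 hd hsb hμ2
    calc ‖h c‖ ≤ 3 * ‖xb‖ / (‖c‖ * r) := hkey
      _ ≤ 3 * ‖xb‖ / (1 / 2 * (δ / 2)) := by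
          apply div_le_div_of_nonneg_left (by positivity) (by positivity)
          rw [hrdef]
          apply mul_le_mul hcn le_rfl (by positivity) (norm_nonneg c)
      _ = 12 * ‖xb‖ / δ := by
          rw [div_eq_div_iff (by positivity) (by positivity)]; ring
  -- k = (z - ξ₀) • h z is bounded on the punctured ball
  set k : ℂ → Y := fun z => (z - ξ₀) • h z with hkdef
  have hkb : ∀ z ∈ ball ξ₀ R \ {ξ₀}, ‖k z‖ ≤ 12 * ‖xb‖ := by
    intro z hz
    have hzne : z ≠ ξ₀ := hz.2
    have hznorm : (0:ℝ) < ‖z - ξ₀‖ := by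
      rw [norm_pos_iff, sub_ne_zero]; exact hzne
    have : ‖k z‖ = ‖z - ξ₀‖ * ‖h z‖ := norm_smul (z - ξ₀) (h z)
    rw [this]
    calc ‖z - ξ₀‖ * ‖h z‖ ≤ ‖z - ξ₀‖ * (12 * ‖xb‖ / ‖z - ξ₀‖) :=
          mul_le_mul_of_nonneg_left (hb z hz) hznorm.le
      _ = 12 * ‖xb‖ := by rw [mul_comm, div_mul_cancel₀ _ hznorm.ne']
  have hkd : DifferentiableOn ℂ k (ball ξ₀ R \ {ξ₀}) :=
    (differentiableOn_id.sub_const ξ₀).smul ((hha.mono hsubU).differentiableOn)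
  have hbdd : BddAbove (norm ∘ k '' (ball ξ₀ R \ {ξ₀})) := by
    refine ⟨12 * ‖xb‖, ?_⟩
    rintro x ⟨z, hz, rfl⟩
    exact hkb z hz
  set L : Y := limUnder (𝓝[≠] ξ₀) k with hLdef
  have hkt : DifferentiableOn ℂ (Function.update k ξ₀ L) (ball ξ₀ R) :=
    Complex.differentiableOn_update_limUnder_of_bddAbove (ball_mem_nhds ξ₀ hR) hkd hbdd
  have hktc : ContinuousAt (Function.update k ξ₀ L) ξ₀ :=
    (hkt.differentiableAt (isOpen_ball.mem_nhds (mem_ball_self hR))).continuousAt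
  have htendk : Tendsto k (𝓝[≠] ξ₀) (𝓝 L) := by
    have h1 : Tendsto (Function.update k ξ₀ L) (𝓝[≠] ξ₀) (𝓝 L) := by
      have := hktc.tendsto
      rw [Function.update_self] at this
      exact this.mono_left nhdsWithin_le_nhds
    apply h1.congr'
    filter_upwards [self_mem_nhdsWithin] with z hz
    exact Function.update_of_ne hz _ _
  -- radial limit forces L = 0
  have hm : Tendsto (fun s : ℝ => (s : ℂ) * ξ₀) (𝓝[>] (1:ℝ)) (𝓝[≠] ξ₀) := by
    apply tendsto_nhdsWithin_of_tendsto_nhds_of_eventually_within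
    · have h1 : Tendsto (fun s : ℝ => (s : ℂ) * ξ₀) (𝓝 1) (𝓝 ((1:ℂ) * ξ₀)) := by
        apply Tendsto.mul_const
        exact (Complex.continuous_ofReal.tendsto 1)
      rw [one_mul] at h1
      exact h1.mono_left nhdsWithin_le_nhds
    · filter_upwards [self_mem_nhdsWithin] with s hs
      simp only [Set.mem_compl_iff, Set.mem_singleton_iff]
      intro heq
      have : (s : ℂ) = 1 := by
        have := mul_right_cancel₀ hξ0 (heq.trans (one_mul ξ₀).symm)
        exact this
      have hs1' : s = 1 := by exact_mod_cast this
      have hs1 : (1:ℝ) < s := hs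
      exact (ne_of_gt hs1) hs1'
  have hcomp : Tendsto (fun s : ℝ => k ((s : ℂ) * ξ₀)) (𝓝[>] (1:ℝ)) (𝓝 L) := htendk.comp hm
  have heq' : (fun s : ℝ => k ((s : ℂ) * ξ₀)) =ᶠ[𝓝[>] (1:ℝ)]
      (fun s : ℝ => ((s : ℂ) * ξ₀ - ξ₀) • resolvent T ((s : ℂ) * ξ₀) xb) := by
    filter_upwards [Ioo_mem_nhdsGT_of_mem
      (Set.left_mem_Ico.mpr (by linarith : (1:ℝ) < 1 + R₀))] with s hs
    obtain ⟨hs1, hs2⟩ := hs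
    have hsnorm : ‖(s : ℂ) * ξ₀ - ξ₀‖ = s - 1 := by
      have : (s : ℂ) * ξ₀ - ξ₀ = ((s : ℝ) - 1 : ℝ) * ξ₀ := by push_cast; ring
      rw [this, norm_mul, Complex.norm_real, hξ, mul_one, Real.norm_eq_abs,
        abs_of_pos (by linarith)]
    have hmem : (s : ℂ) * ξ₀ ∈ U \ {ξ₀} := by
      constructor
      · apply hball
        rw [mem_ball_iff_norm, hsnorm]
        linarith
      · simp only [Set.mem_singleton_iff]
        intro heq
        have : (s : ℂ) = 1 := mul_right_cancel₀ hξ0 (heq.trans (one_mul ξ₀).symm)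
        have : s = 1 := by exact_mod_cast this
        linarith
    have hs1' : ‖(s : ℂ) * ξ₀‖ ≠ 1 := by
      rw [norm_mul, Complex.norm_real, hξ, mul_one, Real.norm_eq_abs, abs_of_pos (by linarith)]
      linarith
    show ((s : ℂ) * ξ₀ - ξ₀) • h ((s : ℂ) * ξ₀) = _
    rw [hhr _ hmem hs1']
  have hL0 : L = 0 := tendsto_nhds_unique (hcomp.congr' heq') hrad
  have htend0 : Tendsto k (𝓝[≠] ξ₀) (𝓝 0) := hL0 ▸ htendk
  -- littleO condition for h
  have ho : (fun z => h z - h ξ₀) =o[𝓝[≠] ξ₀] fun z => (z - ξ₀)⁻¹ := by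
    have h1 : (fun z => h z) =o[𝓝[≠] ξ₀] fun z => (z - ξ₀)⁻¹ := by
      rw [Asymptotics.isLittleO_iff]
      intro ε hε
      have h2 : ∀ᶠ z in 𝓝[≠] ξ₀, ‖k z‖ < ε := by
        have h3 := htend0.norm
        rw [norm_zero] at h3
        exact h3.eventually_lt_const hε
      filter_upwards [h2, self_mem_nhdsWithin] with z hz hzne
      have hzne' : z ≠ ξ₀ := hzne
      have hsub : z - ξ₀ ≠ 0 := sub_ne_zero.mpr hzne'
      have hknorm : ‖k z‖ = ‖z - ξ₀‖ * ‖h z‖ := norm_smul (z - ξ₀) (h z)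
      rw [hknorm] at hz
      have hpos : (0:ℝ) < ‖z - ξ₀‖ := norm_pos_iff.mpr hsub
      rw [norm_inv, ← div_eq_mul_inv, le_div_iff₀ hpos]
      nlinarith
    have h2 : (fun _ : ℂ => h ξ₀) =o[𝓝[≠] ξ₀] fun z => (z - ξ₀)⁻¹ := by
      rw [Asymptotics.isLittleO_iff]
      intro ε hε
      have h3 : ∀ᶠ z in 𝓝[≠] ξ₀, ‖z - ξ₀‖ * (‖h ξ₀‖ + 1) < ε := by
        apply eventually_nhdsWithin_of_eventually_nhds
        have ht : Tendsto (fun z : ℂ => ‖z - ξ₀‖ * (‖h ξ₀‖ + 1)) (𝓝 ξ₀) (𝓝 0) := by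
          have h4 : Tendsto (fun z : ℂ => ‖z - ξ₀‖) (𝓝 ξ₀) (𝓝 ‖ξ₀ - ξ₀‖) :=
            (((continuous_id.sub continuous_const).norm :
              Continuous fun z : ℂ => ‖z - ξ₀‖)).tendsto ξ₀
          rw [sub_self, norm_zero] at h4
          simpa using h4.mul_const (‖h ξ₀‖ + 1)
        exact ht.eventually_lt_const hε
      filter_upwards [h3, self_mem_nhdsWithin] with z hz hzne
      have hzne' : z ≠ ξ₀ := hzne
      have hsub : z - ξ₀ ≠ 0 := sub_ne_zero.mpr hzne'
      have hpos : (0:ℝ) < ‖z - ξ₀‖ := norm_pos_iff.mpr hsub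
      rw [norm_inv, ← div_eq_mul_inv, le_div_iff₀ hpos]
      nlinarith [norm_nonneg (h ξ₀)]
    simpa using h1.sub h2
  -- removable singularity
  have hfd : DifferentiableOn ℂ (Function.update h ξ₀ (limUnder (𝓝[≠] ξ₀) h)) (ball ξ₀ R) :=
    Complex.differentiableOn_update_limUnder_of_isLittleO (ball_mem_nhds ξ₀ hR)
      ((hha.mono hsubU).differentiableOn) ho
  refine ⟨ball ξ₀ R, isOpen_ball, mem_ball_self hR,
    Function.update h ξ₀ (limUnder (𝓝[≠] ξ₀) h), hfd.analyticOnNhd isOpen_ball, ?_⟩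
  intro lam hlam hlam1
  have hne : lam ≠ ξ₀ := fun hc => hlam1 (by rw [hc, hξ])
  rw [Function.update_of_ne hne]
  exact hhr lam ⟨hballU hlam, hne⟩ hlam1
end

section
/- Let B ∈ L(X) be power-bounded and let ξ₀ ∈ Γ be such that the range of (ξ₀ − B) is dense in X. Then for every x₀ ∈ X, the radial limit lim_{s↓1} (sξ₀ − ξ₀)R(sξ₀, B)x₀ = 0 holds. -/
open Filter Topology BoundedContinuousFunction

set_option maxHeartbeats 1000000 in
lemma aux13 {X : Type*} [NormedAddCommGroup X] [NormedSpace ℂ X] [CompleteSpace X]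
    (B : X →L[ℂ] X) (C : ℝ) (hC : ∀ n : ℕ, ‖B ^ n‖ ≤ C) (lam : ℂ) (hlam : 1 < ‖lam‖) :
    ‖resolvent B lam‖ ≤ C / (‖lam‖ - 1) ∧
      ∀ v : X, resolvent B lam (lam • v - B v) = v := by
  have hC0 : 0 ≤ C := le_trans (norm_nonneg _) (hC 0)
  have hlam0 : lam ≠ 0 := by
    intro h; rw [h, norm_zero] at hlam; linarith
  have hnl : (0:ℝ) < ‖lam‖ := by linarith
  set r : ℝ := ‖lam‖⁻¹ with hrdef
  have hr0 : 0 ≤ r := inv_nonneg.2 (norm_nonneg _)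
  have hr1 : r < 1 := by
    rw [hrdef]
    exact inv_lt_one_of_one_lt₀ hlam
  set M : X →L[ℂ] X := algebraMap ℂ (X →L[ℂ] X) lam - B with hM
  have hnormb : ∀ n : ℕ, ‖lam⁻¹ ^ n • B ^ n‖ ≤ C * r ^ n := by
    intro n
    calc ‖lam⁻¹ ^ n • B ^ n‖ = ‖lam⁻¹ ^ n‖ * ‖B ^ n‖ := norm_smul (lam⁻¹ ^ n) (B ^ n)
      _ = ‖lam‖⁻¹ ^ n * ‖B ^ n‖ := by rw [norm_pow, norm_inv]
      _ ≤ ‖lam‖⁻¹ ^ n * C := mul_le_mul_of_nonneg_left (hC n) (by positivity)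
      _ = C * r ^ n := by rw [mul_comm, hrdef]
  have hsumb : Summable (fun n : ℕ => lam⁻¹ ^ n • B ^ n) :=
    Summable.of_norm_bounded ((summable_geometric_of_lt_one hr0 hr1).mul_left C) hnormb
  have hsuma : Summable (fun n : ℕ => lam⁻¹ • (lam⁻¹ ^ n • B ^ n)) := hsumb.const_smul _
  set u : X →L[ℂ] X := ∑' n : ℕ, lam⁻¹ • (lam⁻¹ ^ n • B ^ n) with hu
  have hua : HasSum (fun n : ℕ => lam⁻¹ • (lam⁻¹ ^ n • B ^ n)) u := hsuma.hasSum
  have keyL : ∀ n : ℕ, M * (lam⁻¹ • (lam⁻¹ ^ n • B ^ n))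
      = lam⁻¹ ^ n • B ^ n - lam⁻¹ ^ (n + 1) • B ^ (n + 1) := by
    intro n
    rw [hM]
    simp only [sub_mul, Algebra.algebraMap_eq_smul_one, smul_mul_assoc, one_mul,
      mul_smul_comm, smul_smul]
    have h2 : lam⁻¹ * lam⁻¹ ^ n = lam⁻¹ ^ (n + 1) := (pow_succ' lam⁻¹ n).symm
    have h3 : lam⁻¹ * lam⁻¹ ^ n * lam = lam⁻¹ ^ n := by field_simp
    rw [smul_sub, smul_smul, h3, h2, ← pow_succ']
  have keyR : ∀ n : ℕ, (lam⁻¹ • (lam⁻¹ ^ n • B ^ n)) * M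
      = lam⁻¹ ^ n • B ^ n - lam⁻¹ ^ (n + 1) • B ^ (n + 1) := by
    intro n
    rw [hM]
    simp only [mul_sub, Algebra.algebraMap_eq_smul_one, mul_smul_comm, mul_one,
      smul_mul_assoc, smul_smul]
    have h1 : lam * (lam⁻¹ * lam⁻¹ ^ n) = lam⁻¹ ^ n := by field_simp
    have h2 : lam⁻¹ * lam⁻¹ ^ n = lam⁻¹ ^ (n + 1) := (pow_succ' lam⁻¹ n).symm
    rw [h1, h2, ← pow_succ]
  have htel : HasSum (fun n : ℕ =>
      lam⁻¹ ^ n • B ^ n - lam⁻¹ ^ (n + 1) • B ^ (n + 1)) 1 := by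
    have h1 : HasSum (fun n : ℕ => lam⁻¹ ^ (n + 1) • B ^ (n + 1))
        ((∑' n : ℕ, lam⁻¹ ^ n • B ^ n) - 1) := by
      apply (hasSum_nat_add_iff (f := fun n : ℕ => lam⁻¹ ^ n • B ^ n) 1).2
      simpa using hsumb.hasSum
    simpa using hsumb.hasSum.sub h1
  have hleft : M * u = 1 := by
    have h := hua.mul_left M
    simp only [keyL] at h
    exact h.unique htel
  have hright : u * M = 1 := by
    have h := hua.mul_right M
    simp only [keyR] at h
    exact h.unique htel
  have hres : resolvent B lam = u := by
    have hMu : M = ((⟨M, u, hleft, hright⟩ : (X →L[ℂ] X)ˣ) : X →L[ℂ] X) := rfl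
    rw [resolvent, ← hM, hMu, Ring.inverse_unit]
    rfl
  constructor
  · rw [hres, hu]
    have hg : HasSum (fun n => (C * r) * r ^ n) ((C * r) * (1 - r)⁻¹) :=
      (hasSum_geometric_of_lt_one hr0 hr1).mul_left _
    have hbd : ∀ n : ℕ, ‖lam⁻¹ • (lam⁻¹ ^ n • B ^ n)‖ ≤ (C * r) * r ^ n := by
      intro n
      calc ‖lam⁻¹ • (lam⁻¹ ^ n • B ^ n)‖ = ‖lam‖⁻¹ * ‖lam⁻¹ ^ n • B ^ n‖ := by
            rw [show ‖lam⁻¹ • (lam⁻¹ ^ n • B ^ n)‖ = ‖lam⁻¹‖ * ‖lam⁻¹ ^ n • B ^ n‖ from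
              norm_smul lam⁻¹ (lam⁻¹ ^ n • B ^ n), norm_inv]
        _ ≤ ‖lam‖⁻¹ * (C * r ^ n) :=
            mul_le_mul_of_nonneg_left (hnormb n) (by positivity)
        _ = (C * r) * r ^ n := by rw [hrdef]; ring
    refine (tsum_of_norm_bounded hg hbd).trans (le_of_eq ?_)
    have hAne : ‖lam‖ ≠ 0 := ne_of_gt hnl
    have hrne : r ≠ 0 := by rw [hrdef]; exact inv_ne_zero hAne
    have h1r : 1 - r = (‖lam‖ - 1) * r := by
      rw [hrdef, sub_mul, mul_inv_cancel₀ hAne, one_mul]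
    rw [h1r, mul_inv, div_eq_mul_inv,
      show (C * r) * ((‖lam‖ - 1)⁻¹ * r⁻¹) = C * (‖lam‖ - 1)⁻¹ * (r * r⁻¹) from by ring,
      mul_inv_cancel₀ hrne, mul_one]
  · intro v
    rw [hres]
    have h := congrArg (fun T : X →L[ℂ] X => T v) hright
    simp only [ContinuousLinearMap.mul_apply, ContinuousLinearMap.one_apply] at h
    have hMv : M v = lam • v - B v := by
      rw [hM]
      simp [Algebra.algebraMap_eq_smul_one]
    rw [← hMv]
    exact h

theorem stmt13 {X : Type*} [NormedAddCommGroup X] [NormedSpace ℂ X] [CompleteSpace X]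
    (B : X →L[ℂ] X) (hpb : ∃ C : ℝ, ∀ n : ℕ, ‖B ^ n‖ ≤ C)
    (ξ₀ : ℂ) (hξ : ‖ξ₀‖ = 1)
    (hdense : Dense (Set.range (fun v : X => ξ₀ • v - B v))) :
    ∀ x₀ : X, Tendsto (fun s : ℝ => ((s : ℂ) * ξ₀ - ξ₀) • resolvent B ((s : ℂ) * ξ₀) x₀)
      (𝓝[>] (1 : ℝ)) (𝓝 0) := by
  obtain ⟨C₀, hC₀⟩ := hpb
  set C : ℝ := max C₀ 1 with hCdef
  have hC : ∀ n : ℕ, ‖B ^ n‖ ≤ C := fun n => (hC₀ n).trans (le_max_left _ _)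
  have hC1 : (1:ℝ) ≤ C := le_max_right _ _
  have hCpos : (0:ℝ) < C := by linarith
  intro x₀
  rw [Metric.tendsto_nhdsWithin_nhds]
  intro ε hε
  have hx₀ : x₀ ∈ closure (Set.range (fun v : X => ξ₀ • v - B v)) := hdense x₀
  rw [Metric.mem_closure_iff] at hx₀
  obtain ⟨x, ⟨v, hv⟩, hxd⟩ := hx₀ (ε / (4 * C)) (by positivity)
  set δ : ℝ := min 1 (ε / (4 * (C + 1) * (‖v‖ + 1))) with hδdef
  have hδpos : 0 < δ := lt_min one_pos (by positivity)
  refine ⟨δ, hδpos, ?_⟩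
  intro s hs hsd
  have hs1 : 1 < s := hs
  have hs10 : (0:ℝ) < s - 1 := by linarith
  rw [Real.dist_eq, abs_of_pos hs10] at hsd
  have hsδ2 : s - 1 < ε / (4 * (C + 1) * (‖v‖ + 1)) := lt_of_lt_of_le hsd (min_le_right _ _)
  set lam : ℂ := (s : ℂ) * ξ₀ with hlamdef
  have hnlam : ‖lam‖ = s := by
    rw [hlamdef, norm_mul, hξ, mul_one, Complex.norm_real, Real.norm_eq_abs,
      abs_of_pos (by linarith)]
  have hlam1 : 1 < ‖lam‖ := by rw [hnlam]; exact hs1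
  obtain ⟨hnu, hinv⟩ := aux13 B C hC lam hlam1
  rw [hnlam] at hnu
  set u : X →L[ℂ] X := resolvent B lam with hudef
  have hcast : (s:ℂ) - 1 = ((s - 1 : ℝ) : ℂ) := by push_cast; ring
  have hnc : ‖((s:ℂ) - 1) * ξ₀‖ = s - 1 := by
    rw [norm_mul, hξ, mul_one, hcast, Complex.norm_real, Real.norm_eq_abs, abs_of_pos hs10]
  have hnfac : ‖lam - ξ₀‖ = s - 1 := by
    rw [show lam - ξ₀ = ((s:ℂ) - 1) * ξ₀ by rw [hlamdef]; ring, hnc]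
  -- norm of resolvent
  have hCs : 0 ≤ C / (s - 1) := by positivity
  -- decompose u x₀
  have hxe : x = (lam • v - B v) - (((s:ℂ) - 1) * ξ₀) • v := by
    simp only at hv
    rw [← hv, hlamdef]
    have hxi : ξ₀ • v = ((s:ℂ) * ξ₀) • v - (((s:ℂ) - 1) * ξ₀) • v := by
      rw [← sub_smul]; congr 1; ring
    rw [hxi]; abel
  have huxe : u x = v - (((s:ℂ) - 1) * ξ₀) • u v := by
    rw [hxe, map_sub, map_smul, hinv v]
  have hux : ‖u x‖ ≤ (1 + C) * ‖v‖ := by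
    rw [huxe]
    calc ‖v - (((s:ℂ) - 1) * ξ₀) • u v‖ ≤ ‖v‖ + ‖(((s:ℂ) - 1) * ξ₀) • u v‖ := norm_sub_le _ _
      _ = ‖v‖ + (s - 1) * ‖u v‖ := by
          rw [show ‖(((s:ℂ) - 1) * ξ₀) • u v‖ = ‖((s:ℂ) - 1) * ξ₀‖ * ‖u v‖ from norm_smul (((s:ℂ) - 1) * ξ₀) (u v),
            hnc]
      _ ≤ ‖v‖ + (s - 1) * ((C / (s - 1)) * ‖v‖) := by
          have h1 : ‖u v‖ ≤ (C / (s - 1)) * ‖v‖ :=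
            (u.le_opNorm v).trans (mul_le_mul_of_nonneg_right hnu (norm_nonneg _))
          nlinarith
      _ = (1 + C) * ‖v‖ := by field_simp
  have hux0 : ‖u x₀‖ ≤ ‖u (x₀ - x)‖ + ‖u x‖ := by
    calc ‖u x₀‖ = ‖u (x₀ - x) + u x‖ := by rw [← map_add, sub_add_cancel]
      _ ≤ ‖u (x₀ - x)‖ + ‖u x‖ := norm_add_le _ _
  have k1 : (s - 1) * ‖u (x₀ - x)‖ ≤ ε / 4 := by
    have h1 : ‖u (x₀ - x)‖ ≤ (C / (s - 1)) * (ε / (4 * C)) := by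
      refine (u.le_opNorm _).trans ?_
      have h2 : ‖x₀ - x‖ ≤ ε / (4 * C) := by
        rw [← dist_eq_norm]; exact hxd.le
      exact mul_le_mul hnu h2 (norm_nonneg _) hCs
    calc (s - 1) * ‖u (x₀ - x)‖ ≤ (s - 1) * ((C / (s - 1)) * (ε / (4 * C))) :=
          mul_le_mul_of_nonneg_left h1 hs10.le
      _ = ε / 4 := by field_simp
  have k2 : (s - 1) * ‖u x‖ ≤ ε / 4 := by
    calc (s - 1) * ‖u x‖ ≤ (s - 1) * ((C + 1) * (‖v‖ + 1)) := by
          refine mul_le_mul_of_nonneg_left (hux.trans ?_) hs10.le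
          nlinarith [norm_nonneg v]
      _ ≤ (ε / (4 * (C + 1) * (‖v‖ + 1))) * ((C + 1) * (‖v‖ + 1)) :=
          mul_le_mul_of_nonneg_right hsδ2.le (by positivity)
      _ = ε / 4 := by field_simp
  rw [dist_zero_right,
    show ‖(lam - ξ₀) • u x₀‖ = ‖lam - ξ₀‖ * ‖u x₀‖ from norm_smul (lam - ξ₀) (u x₀), hnfac]
  calc (s - 1) * ‖u x₀‖ ≤ (s - 1) * (‖u (x₀ - x)‖ + ‖u x‖) :=
        mul_le_mul_of_nonneg_left hux0 hs10.le
    _ = (s - 1) * ‖u (x₀ - x)‖ + (s - 1) * ‖u x‖ := mul_add _ _ _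
    _ ≤ ε / 4 + ε / 4 := add_le_add k1 k2
    _ < ε := by linarith
end

section
/- Let B ∈ L(X), (y(n)) ∈ c₀, and let (x(n)) be a bounded solution of x(n+1) = Bx(n) + y(n). If ξ₁ ∈ Γ is not in σ(B), then the function g(λ) = R(λ,S̄)x̄, analytic on C\Γ, extends analytically to a neighborhood of ξ₁, and on a punctured neighborhood of ξ₁ minus Γ one has R(λ,S̄)x̄ = (λ − B̄)⁻¹ x̄, where B̄ is the operator induced on Y = l∞/c₀ by coordinatewise application of B. -/
open Filter Topology BoundedContinuousFunction

noncomputable section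

variable (X : Type*) [NormedAddCommGroup X] [NormedSpace ℂ X]

/-- The closed subspace `c₀` of `ℓ∞(ℕ, X)` of sequences tending to `0`. -/
def czero : Submodule ℂ (ℕ →ᵇ X) where
  carrier := {x | Tendsto (fun n => x n) atTop (𝓝 (0 : X))}
  add_mem' := by
    intro a b ha hb
    have := ha.add hb
    simpa using this
  zero_mem' := by simpa using (tendsto_const_nhds : Tendsto (fun _ : ℕ => (0:X)) atTop (𝓝 0))
  smul_mem' := by
    intro c a ha
    have := ha.const_smul c
    simpa using this

lemma czero_isClosed : IsClosed ((czero X : Set (ℕ →ᵇ X))) := by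
  refine IsSeqClosed.isClosed ?_
  intro u x hu hux
  show Tendsto (fun n => x n) atTop (𝓝 (0:X))
  rw [NormedAddCommGroup.tendsto_nhds_zero]
  intro ε hε
  obtain ⟨k, hk⟩ := Metric.tendsto_atTop.mp hux (ε/2) (by positivity)
  have hk' : dist (u k) x < ε/2 := hk k le_rfl
  have hmem : Tendsto (fun n => (u k) n) atTop (𝓝 (0:X)) := hu k
  have h2 := NormedAddCommGroup.tendsto_nhds_zero.mp hmem (ε/2) (by positivity)
  filter_upwards [h2] with n hn
  have hd : ‖x n - (u k) n‖ ≤ dist (u k) x := by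
    rw [← dist_eq_norm, dist_comm]
    exact BoundedContinuousFunction.dist_coe_le_dist n
  calc ‖x n‖ = ‖(x n - (u k) n) + (u k) n‖ := by rw [sub_add_cancel]
    _ ≤ ‖x n - (u k) n‖ + ‖(u k) n‖ := norm_add_le _ _
    _ < ε/2 + ε/2 := add_lt_add (lt_of_le_of_lt hd hk') hn
    _ = ε := by ring

attribute [instance] czero_isClosed

/-- The quotient space `Y = ℓ∞/c₀`. -/
abbrev YY := (ℕ →ᵇ X) ⧸ czero X

/-- The shift operator on `ℓ∞(ℕ, X)`. -/
def shiftOp : (ℕ →ᵇ X) →L[ℂ] (ℕ →ᵇ X) :=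
  LinearMap.mkContinuous
    { toFun := fun x => x.compContinuous ⟨fun n => n + 1, continuous_of_discreteTopology⟩
      map_add' := by intro a b; ext n; simp
      map_smul' := by intro c a; ext n; simp }
    1 (fun x => by simpa using x.norm_compContinuous_le ⟨fun n => n + 1, continuous_of_discreteTopology⟩)

lemma shift_mem_czero : czero X ≤ (czero X).comap (shiftOp X).toLinearMap := by
  intro a ha
  have h : Tendsto (fun n => a (n + 1)) atTop (𝓝 (0:X)) :=
    ha.comp (tendsto_add_atTop_nat 1)
  exact h

/-- The operator induced by the shift on the quotient `Y = ℓ∞/c₀`. -/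
def shiftBar : YY X →L[ℂ] YY X :=
  LinearMap.mkContinuous
    (Submodule.mapQ (czero X) (czero X) (shiftOp X).toLinearMap (shift_mem_czero X))
    1 (fun xb => by
      rw [one_mul]
      refine le_of_forall_pos_le_add (fun ε hε => ?_)
      obtain ⟨m, hm, hlt⟩ := Submodule.Quotient.norm_mk_lt xb hε
      calc ‖Submodule.mapQ (czero X) (czero X) (shiftOp X).toLinearMap (shift_mem_czero X) xb‖
          = ‖(Submodule.Quotient.mk (shiftOp X m) : YY X)‖ := by
            rw [← hm, Submodule.mapQ_apply]; rfl
        _ ≤ ‖shiftOp X m‖ := Submodule.Quotient.norm_mk_le _ _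
        _ ≤ ‖m‖ := by
            exact m.norm_compContinuous_le
              ⟨fun n => n + 1, continuous_of_discreteTopology⟩
        _ ≤ ‖xb‖ + ε := le_of_lt hlt)

/-- The spectrum `σ(x)` of a bounded sequence: the set of non-removable singular
points on the unit circle of `λ ↦ R(λ, S̄) x̄`. -/
def seqSpectrum (x : ℕ →ᵇ X) : Set ℂ :=
  {ξ : ℂ | ‖ξ‖ = 1 ∧
    ¬ ∃ (U : Set ℂ) (f : ℂ → YY X), IsOpen U ∧ ξ ∈ U ∧ AnalyticOnNhd ℂ f U ∧
      ∀ lam ∈ U, ‖lam‖ ≠ 1 →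
        f lam = resolvent (shiftBar X) lam (Submodule.Quotient.mk x)}

end

/-- The operator on `Y = ℓ∞/c₀` induced by coordinatewise application of `B`. -/
noncomputable def Bbar (X : Type*) [NormedAddCommGroup X] [NormedSpace ℂ X] (B : X →L[ℂ] X) :
    YY X →L[ℂ] YY X :=
  LinearMap.mkContinuous
    (Submodule.mapQ (czero X) (czero X) (B.compLeftContinuousBounded ℕ).toLinearMap
      (by
        intro a ha
        have h : Tendsto (fun n : ℕ => B (a n)) atTop (𝓝 (0 : X)) := by
          have := (B.continuous.tendsto 0).comp
            (show Tendsto (fun n => a n) atTop (𝓝 (0 : X)) from ha)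
          rw [map_zero] at this
          exact this
        exact h))
    ‖B‖ (fun xb => by
      refine le_of_forall_pos_le_add (fun ε hε => ?_)
      have hB1 : (0 : ℝ) < ‖B‖ + 1 := by positivity
      obtain ⟨m, hm, hlt⟩ := Submodule.Quotient.norm_mk_lt xb (div_pos hε hB1)
      have hBnorm : ‖B.compLeftContinuousBounded ℕ m‖ ≤ ‖B‖ * ‖m‖ :=
        ((B.compLeftContinuousBounded ℕ).le_opNorm m).trans
          (mul_le_mul_of_nonneg_right
            (LinearMap.mkContinuous_norm_le _ (norm_nonneg B) _) (norm_nonneg m))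
      calc ‖Submodule.mapQ (czero X) (czero X) (B.compLeftContinuousBounded ℕ).toLinearMap _ xb‖
          = ‖(Submodule.Quotient.mk (B.compLeftContinuousBounded ℕ m) : YY X)‖ := by
            rw [← hm]; rfl
        _ ≤ ‖B.compLeftContinuousBounded ℕ m‖ := Submodule.Quotient.norm_mk_le _ _
        _ ≤ ‖B‖ * ‖m‖ := hBnorm
        _ ≤ ‖B‖ * (‖xb‖ + ε / (‖B‖ + 1)) :=
            mul_le_mul_of_nonneg_left (le_of_lt hlt) (norm_nonneg B)
        _ ≤ ‖B‖ * ‖xb‖ + ε := by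
            rw [mul_add]
            have h1 : ‖B‖ * (ε / (‖B‖ + 1)) ≤ ε := by
              rw [mul_div_assoc'] at *
              rw [div_le_iff₀ hB1]
              nlinarith [norm_nonneg B, le_of_lt hε]
            linarith)

noncomputable section AuxProof

variable {X : Type*} [NormedAddCommGroup X] [NormedSpace ℂ X]

namespace StmtAux

local notation "q" => (Submodule.Quotient.mk : (ℕ →ᵇ X) → YY X)

lemma shiftBar_mk (m : ℕ →ᵇ X) : shiftBar X (q m) = q (shiftOp X m) := rfl

lemma Bbar_mk (B : X →L[ℂ] X) (m : ℕ →ᵇ X) :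
    Bbar X B (q m) = q (B.compLeftContinuousBounded ℕ m) := rfl

lemma shiftOp_apply (m : ℕ →ᵇ X) (n : ℕ) : shiftOp X m n = m (n + 1) := rfl

lemma op_ext {f g : YY X →L[ℂ] YY X} (h : ∀ m : ℕ →ᵇ X, f (q m) = g (q m)) : f = g := by
  ext z
  obtain ⟨m, rfl⟩ := Submodule.Quotient.mk_surjective _ z
  exact h m

/-- `Bbar` is multiplicative. -/
lemma Bbar_mul (C D : X →L[ℂ] X) : Bbar X (C * D) = Bbar X C * Bbar X D := by
  refine op_ext fun m => ?_
  rw [ContinuousLinearMap.mul_apply, Bbar_mk, Bbar_mk, Bbar_mk]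
  congr 1

lemma Bbar_one : Bbar X (1 : X →L[ℂ] X) = 1 := by
  refine op_ext fun m => ?_
  rw [Bbar_mk, ContinuousLinearMap.one_apply]
  congr 1

/-- `Bbar` commutes with `λ • 1 - ·`. -/
lemma Bbar_charPoly (B : X →L[ℂ] X) (lam : ℂ) :
    algebraMap ℂ (YY X →L[ℂ] YY X) lam - Bbar X B
      = Bbar X (algebraMap ℂ (X →L[ℂ] X) lam - B) := by
  refine op_ext fun m => ?_
  rw [ContinuousLinearMap.sub_apply, Bbar_mk, Bbar_mk,
    Algebra.algebraMap_eq_smul_one, Algebra.algebraMap_eq_smul_one,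
    ContinuousLinearMap.smul_apply, ContinuousLinearMap.one_apply,
    ← Submodule.Quotient.mk_smul, ← Submodule.Quotient.mk_sub]
  congr 1

/-- If `λ - B` is a unit, so is `λ - B̄`. -/
lemma isUnit_charPoly_Bbar {B : X →L[ℂ] X} {lam : ℂ}
    (h : IsUnit (algebraMap ℂ (X →L[ℂ] X) lam - B)) :
    IsUnit (algebraMap ℂ (YY X →L[ℂ] YY X) lam - Bbar X B) := by
  obtain ⟨u, hu⟩ := h
  refine ⟨⟨algebraMap ℂ (YY X →L[ℂ] YY X) lam - Bbar X B, Bbar X ↑u⁻¹, ?_, ?_⟩, rfl⟩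
  · rw [Bbar_charPoly, ← Bbar_mul, ← hu, u.mul_inv, Bbar_one]
  · rw [Bbar_charPoly, ← Bbar_mul, ← hu, u.inv_mul, Bbar_one]

/-- The shift commutes with `B̄`. -/
lemma shiftBar_comm_Bbar (B : X →L[ℂ] X) :
    shiftBar X * Bbar X B = Bbar X B * shiftBar X := by
  refine op_ext fun m => ?_
  rw [ContinuousLinearMap.mul_apply, ContinuousLinearMap.mul_apply,
    Bbar_mk, shiftBar_mk, shiftBar_mk, Bbar_mk]
  congr 1

omit [NormedSpace ℂ X] in
lemma backFun_bound (m : ℕ →ᵇ X) (n : ℕ) :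
    ‖if n = 0 then (0 : X) else m (n - 1)‖ ≤ ‖m‖ := by
  split_ifs with h
  · simp
  · exact m.norm_coe_le_norm _

variable (X) in
/-- The backwards shift on `ℓ∞`. -/
def backOp : (ℕ →ᵇ X) →L[ℂ] (ℕ →ᵇ X) :=
  LinearMap.mkContinuous
    { toFun := fun m => BoundedContinuousFunction.ofNormedAddCommGroup
        (fun n => if n = 0 then 0 else m (n - 1)) continuous_of_discreteTopology ‖m‖
        (backFun_bound m)
      map_add' := by
        intro a b; ext n
        simp only [BoundedContinuousFunction.coe_add, Pi.add_apply,
          BoundedContinuousFunction.coe_ofNormedAddCommGroup]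
        split_ifs <;> simp
      map_smul' := by
        intro c a; ext n
        simp only [BoundedContinuousFunction.coe_smul, Pi.smul_apply,
          BoundedContinuousFunction.coe_ofNormedAddCommGroup, RingHom.id_apply]
        split_ifs <;> simp }
    1 (fun m => by
      rw [one_mul]
      exact BoundedContinuousFunction.norm_ofNormedAddCommGroup_le _ (norm_nonneg m)
        (backFun_bound m))

lemma norm_backOp_le (m : ℕ →ᵇ X) : ‖backOp X m‖ ≤ ‖m‖ :=
  BoundedContinuousFunction.norm_ofNormedAddCommGroup_le _ (norm_nonneg m) (backFun_bound m)

lemma backOp_apply (m : ℕ →ᵇ X) (n : ℕ) :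
    backOp X m n = if n = 0 then 0 else m (n - 1) := rfl

lemma backOp_mem_czero : czero X ≤ (czero X).comap (backOp X).toLinearMap := by
  intro a ha
  have h : Tendsto (fun n : ℕ => backOp X a n) atTop (𝓝 (0 : X)) := by
    have h1 : Tendsto (fun n : ℕ => a (n - 1)) atTop (𝓝 (0 : X)) :=
      ha.comp (tendsto_sub_atTop_nat 1)
    refine h1.congr' ?_
    filter_upwards [eventually_ne_atTop 0] with n hn
    rw [backOp_apply, if_neg hn]
  exact h

variable (X) in
/-- The backwards shift on the quotient. -/
def backBar : YY X →L[ℂ] YY X :=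
  LinearMap.mkContinuous
    (Submodule.mapQ (czero X) (czero X) (backOp X).toLinearMap backOp_mem_czero)
    1 (fun xb => by
      rw [one_mul]
      refine le_of_forall_pos_le_add (fun ε hε => ?_)
      obtain ⟨m, hm, hlt⟩ := Submodule.Quotient.norm_mk_lt xb hε
      calc ‖Submodule.mapQ (czero X) (czero X) (backOp X).toLinearMap backOp_mem_czero xb‖
          = ‖(Submodule.Quotient.mk (backOp X m) : YY X)‖ := by
            rw [← hm, Submodule.mapQ_apply]; rfl
        _ ≤ ‖backOp X m‖ := Submodule.Quotient.norm_mk_le _ _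
        _ ≤ ‖m‖ := norm_backOp_le m
        _ ≤ ‖xb‖ + ε := le_of_lt hlt)

lemma backBar_mk (m : ℕ →ᵇ X) : backBar X (q m) = q (backOp X m) := rfl

lemma shiftBar_mul_backBar : shiftBar X * backBar X = 1 := by
  refine op_ext fun m => ?_
  rw [ContinuousLinearMap.mul_apply, ContinuousLinearMap.one_apply, backBar_mk, shiftBar_mk]
  congr 1

lemma backBar_mul_shiftBar : backBar X * shiftBar X = 1 := by
  refine op_ext fun m => ?_
  rw [ContinuousLinearMap.mul_apply, ContinuousLinearMap.one_apply, shiftBar_mk, backBar_mk]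
  rw [Submodule.Quotient.eq]
  have : Tendsto (fun n => (backOp X (shiftOp X m) - m) n) atTop (𝓝 (0 : X)) := by
    refine tendsto_const_nhds.congr' ?_
    filter_upwards [eventually_ne_atTop 0] with n hn
    obtain ⟨k, rfl⟩ := Nat.exists_eq_succ_of_ne_zero hn
    simp [backOp_apply, shiftOp_apply]
  exact this

lemma norm_shiftBar_le : ‖shiftBar X‖ ≤ 1 :=
  LinearMap.mkContinuous_norm_le _ zero_le_one _

lemma norm_backBar_le : ‖backBar X‖ ≤ 1 :=
  LinearMap.mkContinuous_norm_le _ zero_le_one _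

lemma alg_key₁ {A : Type*} [Ring A] [Algebra ℂ A] {lam : ℂ} (hlam : lam ≠ 0) (S : A) :
    algebraMap ℂ A lam - S = algebraMap ℂ A lam * (1 - lam⁻¹ • S) := by
  rw [mul_sub, mul_one, Algebra.algebraMap_eq_smul_one, smul_mul_assoc, one_mul,
    smul_smul, mul_inv_cancel₀ hlam, one_smul]

lemma alg_key₂ {A : Type*} [Ring A] [Algebra ℂ A] (lam : ℂ) {S T : A} (hST : S * T = 1) :
    algebraMap ℂ A lam - S = -(S * (1 - lam • T)) := by
  rw [mul_sub, mul_one, mul_smul_comm, hST, neg_sub, Algebra.algebraMap_eq_smul_one]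

/-- `λ - S̄` is a unit whenever `‖λ‖ ≠ 1`. -/
lemma isUnit_charPoly_shiftBar [CompleteSpace X] {lam : ℂ} (h : ‖lam‖ ≠ 1) :
    IsUnit (algebraMap ℂ (YY X →L[ℂ] YY X) lam - shiftBar X) := by
  rcases lt_or_gt_of_ne h with hlt | hgt
  · -- ‖lam‖ < 1 : λ - S̄ = -(S̄ * (1 - λ • T))
    have hS : IsUnit (shiftBar X) :=
      ⟨⟨shiftBar X, backBar X, shiftBar_mul_backBar, backBar_mul_shiftBar⟩, rfl⟩
    have hnorm : ‖lam • backBar X‖ < 1 := by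
      calc ‖lam • backBar X‖ ≤ ‖lam‖ * ‖backBar X‖ := ContinuousLinearMap.opNorm_smul_le _ _
        _ ≤ ‖lam‖ * 1 := mul_le_mul_of_nonneg_left norm_backBar_le (norm_nonneg _)
        _ < 1 := by rwa [mul_one]
    have hone : IsUnit (1 - lam • backBar X) := isUnit_one_sub_of_norm_lt_one (R := YY X →L[ℂ] YY X) hnorm
    have key : algebraMap ℂ (YY X →L[ℂ] YY X) lam - shiftBar X
        = -(shiftBar X * (1 - lam • backBar X)) :=
      alg_key₂ lam shiftBar_mul_backBar
    rw [key]
    exact (hS.mul hone).neg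
  · -- ‖lam‖ > 1 : λ - S̄ = (λ•1) * (1 - λ⁻¹ • S̄)
    have hlam : lam ≠ 0 := by
      intro h0; rw [h0, norm_zero] at hgt; linarith
    have hnorm : ‖lam⁻¹ • shiftBar X‖ < 1 := by
      calc ‖lam⁻¹ • shiftBar X‖ ≤ ‖lam⁻¹‖ * ‖shiftBar X‖ := ContinuousLinearMap.opNorm_smul_le _ _
        _ ≤ ‖lam⁻¹‖ * 1 := mul_le_mul_of_nonneg_left norm_shiftBar_le (norm_nonneg _)
        _ < 1 := by
            rw [mul_one, norm_inv]
            exact inv_lt_one_of_one_lt₀ hgt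
    have hone : IsUnit (1 - lam⁻¹ • shiftBar X) := isUnit_one_sub_of_norm_lt_one (R := YY X →L[ℂ] YY X) hnorm
    have hsc : IsUnit (algebraMap ℂ (YY X →L[ℂ] YY X) lam) :=
      (Ne.isUnit hlam).map (algebraMap ℂ (YY X →L[ℂ] YY X))
    have key : algebraMap ℂ (YY X →L[ℂ] YY X) lam - shiftBar X
        = algebraMap ℂ (YY X →L[ℂ] YY X) lam * (1 - lam⁻¹ • shiftBar X) :=
      alg_key₁ hlam _
    rw [key]
    exact hsc.mul hone

end StmtAux

end AuxProof

set_option maxHeartbeats 1000000 in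
theorem stmt19 (X : Type*) [NormedAddCommGroup X] [NormedSpace ℂ X] [CompleteSpace X]
    (B : X →L[ℂ] X) (x y : ℕ →ᵇ X) (hy : y ∈ czero X)
    (hrec : ∀ n : ℕ, x (n + 1) = B (x n) + y n)
    (ξ₁ : ℂ) (hξ : ‖ξ₁‖ = 1) (hξB : ξ₁ ∉ spectrum ℂ B) :
    ∃ V : Set ℂ, IsOpen V ∧ ξ₁ ∈ V ∧
      (∃ f : ℂ → YY X, AnalyticOnNhd ℂ f V ∧
        ∀ lam ∈ V, ‖lam‖ ≠ 1 →
          f lam = resolvent (shiftBar X) lam (Submodule.Quotient.mk x)) ∧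
      ∀ lam ∈ V, ‖lam‖ ≠ 1 →
        resolvent (shiftBar X) lam (Submodule.Quotient.mk x) =
          resolvent (Bbar X B) lam (Submodule.Quotient.mk x) := by
  set xb : YY X := Submodule.Quotient.mk x with hxb
  -- the fundamental relation S̄ x̄ = B̄ x̄
  have hSx : shiftBar X xb = Bbar X B xb := by
    rw [hxb, StmtAux.shiftBar_mk, StmtAux.Bbar_mk, Submodule.Quotient.eq]
    have hcoord : ∀ n, (shiftOp X x - B.compLeftContinuousBounded ℕ x) n = y n := by
      intro n
      have : x (n + 1) - B (x n) = y n := by rw [hrec n]; abel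
      simpa [StmtAux.shiftOp_apply,
        ContinuousLinearMap.compLeftContinuousBounded_apply] using this
    exact (hy : Tendsto (fun n => y n) atTop (𝓝 0)).congr fun n => (hcoord n).symm
  -- for every suitable lam, the two resolvents agree at x̄
  have main : ∀ lam : ℂ, lam ∉ spectrum ℂ B → ‖lam‖ ≠ 1 →
      resolvent (shiftBar X) lam xb = resolvent (Bbar X B) lam xb := by
    intro lam hlam hnorm
    have hMB : IsUnit (algebraMap ℂ (X →L[ℂ] X) lam - B) := spectrum.notMem_iff.mp hlam
    have hM : IsUnit (algebraMap ℂ (YY X →L[ℂ] YY X) lam - Bbar X B) :=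
      StmtAux.isUnit_charPoly_Bbar hMB
    have hN : IsUnit (algebraMap ℂ (YY X →L[ℂ] YY X) lam - shiftBar X) :=
      StmtAux.isUnit_charPoly_shiftBar hnorm
    set M : YY X →L[ℂ] YY X := algebraMap ℂ (YY X →L[ℂ] YY X) lam - Bbar X B with hMdef
    set N : YY X →L[ℂ] YY X := algebraMap ℂ (YY X →L[ℂ] YY X) lam - shiftBar X with hNdef
    set R : YY X →L[ℂ] YY X := Ring.inverse M with hRdef
    have hRM : R * M = 1 := Ring.inverse_mul_cancel M hM
    have hMR : M * R = 1 := Ring.mul_inverse_cancel M hM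
    have hcomm : shiftBar X * M = M * shiftBar X := by
      rw [hMdef, mul_sub, sub_mul, StmtAux.shiftBar_comm_Bbar, Algebra.commutes]
    have hScomm : shiftBar X * R = R * shiftBar X := by
      have h1 : shiftBar X * R = (R * M) * (shiftBar X * R) := by rw [hRM, one_mul]
      rw [h1, mul_assoc, ← mul_assoc M, ← hcomm, mul_assoc, hMR, mul_one]
    set u : YY X := R xb with hu
    have hNu : N u = xb := by
      have e2 : shiftBar X (R xb) = R (shiftBar X xb) := by
        have := congrArg (fun T : YY X →L[ℂ] YY X => T xb) hScomm
        simpa [ContinuousLinearMap.mul_apply] using this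
      have e3 : (algebraMap ℂ (YY X →L[ℂ] YY X) lam) (R xb)
          = R ((algebraMap ℂ (YY X →L[ℂ] YY X) lam) xb) := by
        have hc := Algebra.commutes lam R
        have := congrArg (fun T : YY X →L[ℂ] YY X => T xb) hc
        simpa [ContinuousLinearMap.mul_apply] using this
      have e5 := congrArg (fun T : YY X →L[ℂ] YY X => T xb) hRM
      calc N u = (algebraMap ℂ (YY X →L[ℂ] YY X) lam) (R xb) - shiftBar X (R xb) := by
            rw [hNdef, hu, ContinuousLinearMap.sub_apply]
        _ = R ((algebraMap ℂ (YY X →L[ℂ] YY X) lam) xb) - R (Bbar X B xb) := by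
            rw [e2, e3, hSx]
        _ = R (M xb) := by rw [← map_sub, hMdef, ContinuousLinearMap.sub_apply]
        _ = xb := by simpa [ContinuousLinearMap.mul_apply] using e5
    have hres : resolvent (shiftBar X) lam xb = u := by
      have e6 := congrArg (fun T : YY X →L[ℂ] YY X => T u) (Ring.inverse_mul_cancel N hN)
      have e7 : Ring.inverse N (N u) = u := by
        simpa [ContinuousLinearMap.mul_apply] using e6
      calc resolvent (shiftBar X) lam xb = Ring.inverse N xb := by rw [resolvent, hNdef]
        _ = Ring.inverse N (N u) := by rw [hNu]
        _ = u := e7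
    have hres2 : resolvent (Bbar X B) lam xb = u := by
      rw [resolvent, ← hMdef, ← hRdef, hu]
    rw [hres, hres2]
  refine ⟨(spectrum ℂ B)ᶜ, (spectrum.isClosed B).isOpen_compl, hξB, ?_, fun lam hl hn => main lam hl hn⟩
  refine ⟨fun lam => resolvent (Bbar X B) lam xb, ?_, fun lam hl hn => (main lam hl hn).symm⟩
  intro lam hlam
  have hM : IsUnit (algebraMap ℂ (YY X →L[ℂ] YY X) lam - Bbar X B) :=
    StmtAux.isUnit_charPoly_Bbar (spectrum.notMem_iff.mp hlam)
  have h1 : AnalyticAt ℂ (fun z : ℂ => algebraMap ℂ (YY X →L[ℂ] YY X) z - Bbar X B) lam := by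
    have h0 : AnalyticAt ℂ (⇑((ContinuousLinearMap.id ℂ ℂ).smulRight
        (1 : YY X →L[ℂ] YY X))) lam :=
      ContinuousLinearMap.analyticAt _ lam
    have h0' : AnalyticAt ℂ (fun z : ℂ => z • (1 : YY X →L[ℂ] YY X)) lam := by
      exact h0
    have : AnalyticAt ℂ (fun z : ℂ => z • (1 : YY X →L[ℂ] YY X) - Bbar X B) lam :=
      h0'.sub analyticAt_const
    simpa [Algebra.algebraMap_eq_smul_one] using this
  have h2 : AnalyticAt ℂ (Ring.inverse : (YY X →L[ℂ] YY X) → (YY X →L[ℂ] YY X))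
      (algebraMap ℂ (YY X →L[ℂ] YY X) lam - Bbar X B) := by
    have := analyticAt_inverse (𝕜 := ℂ) (A := YY X →L[ℂ] YY X) hM.unit
    rwa [IsUnit.unit_spec] at this
  have h3 : AnalyticAt ℂ
      (fun z : ℂ => Ring.inverse (algebraMap ℂ (YY X →L[ℂ] YY X) z - Bbar X B)) lam := by
    have := AnalyticAt.comp (𝕜 := ℂ) (g := Ring.inverse)
      (f := fun z : ℂ => algebraMap ℂ (YY X →L[ℂ] YY X) z - Bbar X B) (x := lam) h2 h1
    exact this
  have h4 : AnalyticAt ℂ (fun z : ℂ => (ContinuousLinearMap.apply ℂ (YY X) xb)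
      (Ring.inverse (algebraMap ℂ (YY X →L[ℂ] YY X) z - Bbar X B))) lam :=
    (ContinuousLinearMap.analyticAt _ _).comp h3
  exact h4.congr (Filter.Eventually.of_forall fun z => rfl)
end
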